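/- arXiv:1802.03622 — 2 statements merged into one kernel-verified Lean document; each statement's English description precedes it below -/
import Mathlib

section
/- Let f be a 2π-periodic continuous complex-valued function with Fourier coefficients a_k, and let c_n[f] be the n×n optimal circulant preconditioner with first-column entries c_k = ((n−k)a_k + k a_{k−n})/n for 0 ≤ k < n. Then ‖c_n[f]‖₂ ≤ 2‖f‖_∞ for all n ≥ 1. -/
open scoped BigOperators

noncomputable section

/-- The operator 2-norm (spectral norm) of a complex matrix. -/
def spec {n : ℕ} (A : Matrix (Fin n) (Fin n) ℂ) : ℝ :=
  ‖(Matrix.toEuclideanCLM (𝕜 := ℂ) A : EuclideanSpace ℂ (Fin n) →L[ℂ] EuclideanSpace ℂ (Fin n))‖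

/-- The matrix exponential. -/
def mexp {n : ℕ} (A : Matrix (Fin n) (Fin n) ℂ) : Matrix (Fin n) (Fin n) ℂ :=
  NormedSpace.exp A

/-- The matrix sine, sin A = (e^{iA} - e^{-iA})/(2i). -/
def msin {n : ℕ} (A : Matrix (Fin n) (Fin n) ℂ) : Matrix (Fin n) (Fin n) ℂ :=
  (2 * Complex.I)⁻¹ • (mexp (Complex.I • A) - mexp ((-Complex.I) • A))

/-- The matrix cosine, cos A = (e^{iA} + e^{-iA})/2. -/
def mcos {n : ℕ} (A : Matrix (Fin n) (Fin n) ℂ) : Matrix (Fin n) (Fin n) ℂ :=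
  (2 : ℂ)⁻¹ • (mexp (Complex.I • A) + mexp ((-Complex.I) • A))

/-- A vector norm on ℂⁿ. -/
structure VectorNorm (n : ℕ) where
  V : (Fin n → ℂ) → ℝ
  nonneg : ∀ x, 0 ≤ V x
  eq_zero_iff : ∀ x, V x = 0 ↔ x = 0
  triangle : ∀ x y, V (x + y) ≤ V x + V y
  homog : ∀ (c : ℂ) x, V (c • x) = ‖c‖ * V x

/-- The subordinate (operator) matrix norm induced by a vector norm:
    ‖A‖ = sup_{x ≠ 0} ‖Ax‖/‖x‖. -/
def VectorNorm.opNorm {n : ℕ} (N : VectorNorm n) (A : Matrix (Fin n) (Fin n) ℂ) : ℝ :=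
  sSup {r | ∃ x, x ≠ 0 ∧ r = N.V (A.mulVec x) / N.V x}

/-- A consistent (submultiplicative) matrix norm. -/
structure ConsistentNorm (n : ℕ) where
  ν : Matrix (Fin n) (Fin n) ℂ → ℝ
  nonneg : ∀ A, 0 ≤ ν A
  eq_zero_iff : ∀ A, ν A = 0 ↔ A = 0
  triangle : ∀ A B, ν (A + B) ≤ ν A + ν B
  homog : ∀ (c : ℂ) A, ν (c • A) = ‖c‖ * ν A
  submul : ∀ A B, ν (A * B) ≤ ν A * ν B

/-- Fourier coefficient a_k = (1/2π) ∫_{-π}^{π} f(θ) e^{-ikθ} dθ. -/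
def fourierCoeff' (f : ℝ → ℂ) (k : ℤ) : ℂ :=
  (1 / (2 * (Real.pi : ℂ))) * ∫ θ in (-Real.pi)..Real.pi, f θ * Complex.exp (-Complex.I * k * θ)

/-- The n×n Toeplitz matrix generated by f, with (j,k)-entry a_{j-k}. -/
def toeplitz (f : ℝ → ℂ) (n : ℕ) : Matrix (Fin n) (Fin n) ℂ :=
  fun j k => fourierCoeff' f ((j : ℤ) - (k : ℤ))

/-- The optimal circulant preconditioner of A_n[f], with first-column entries
    c_k = ((n-k)a_k + k a_{k-n})/n. -/
def optCirculant (f : ℝ → ℂ) (n : ℕ) : Matrix (Fin n) (Fin n) ℂ :=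
  Matrix.circulant (fun k : Fin n =>
    (((n : ℂ) - ((k : ℕ) : ℂ)) * fourierCoeff' f ((k : ℕ) : ℤ)
      + ((k : ℕ) : ℂ) * fourierCoeff' f (((k : ℕ) : ℤ) - (n : ℤ))) / (n : ℂ))

/-- The supremum norm of f over [-π, π]. -/
def supNorm (f : ℝ → ℂ) : ℝ :=
  ⨆ θ : Set.Icc (-Real.pi) Real.pi, ‖f (θ : ℝ)‖

/-- The unitary Fourier matrix, F_{jk} = (1/√n) e^{-2πi jk/n}. -/
def fourierMatrix (n : ℕ) : Matrix (Fin n) (Fin n) ℂ :=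
  fun j k => ((1 / Real.sqrt n : ℝ) : ℂ) *
    Complex.exp (-2 * (Real.pi : ℂ) * Complex.I * ((j : ℕ) : ℂ) * ((k : ℕ) : ℂ) / (n : ℂ))

namespace S4
open Complex Finset


/-- The character exp(2πi j m / n). -/
def psi (n : ℕ) (j : Fin n) (m : ℤ) : ℂ :=
  Complex.exp (2 * (Real.pi : ℂ) * Complex.I * ((j : ℕ) : ℂ) * (m : ℂ) / (n : ℂ))

lemma psi_add (n : ℕ) (j : Fin n) (a b : ℤ) : psi n j (a + b) = psi n j a * psi n j b := by
  rw [psi, psi, psi, ← Complex.exp_add]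
  congr 1
  push_cast
  ring

lemma psi_zero (n : ℕ) (j : Fin n) : psi n j 0 = 1 := by
  simp [psi]

lemma psi_n_mul (n : ℕ) (hn : 0 < n) (j : Fin n) (t : ℤ) : psi n j ((n : ℤ) * t) = 1 := by
  rw [psi]
  have hn' : (n : ℂ) ≠ 0 := Nat.cast_ne_zero.mpr hn.ne'
  have : (2 * (Real.pi : ℂ) * Complex.I * ((j : ℕ) : ℂ) * (((n : ℤ) * t : ℤ) : ℂ) / (n : ℂ))
      = (((j : ℕ) * t : ℤ) : ℂ) * (2 * (Real.pi : ℂ) * Complex.I) := by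
    field_simp
    push_cast
    ring
  rw [this, Complex.exp_int_mul_two_pi_mul_I]

lemma psi_fin_sub (n : ℕ) (hn : 0 < n) (j : Fin n) (p k : Fin n) :
    psi n j ((((p - k : Fin n) : ℕ) : ℤ)) = psi n j (((p : ℕ) : ℤ) - ((k : ℕ) : ℤ)) := by
  rcases le_or_gt (k : ℕ) (p : ℕ) with h | h
  · have : ((p - k : Fin n) : ℕ) = (p : ℕ) - (k : ℕ) := Fin.sub_val_of_le h
    rw [this]
    congr 1
    omega
  · have hval : ((p - k : Fin n) : ℕ) = (p : ℕ) + n - (k : ℕ) := by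
      rw [Fin.sub_def]
      simp only
      have hk : (k : ℕ) ≤ n := k.isLt.le
      have hlt : n - (k : ℕ) + (p : ℕ) < n := by omega
      rw [Nat.mod_eq_of_lt hlt]
      omega
    rw [hval]
    have : (((p : ℕ) + n - (k : ℕ) : ℕ) : ℤ) = (((p : ℕ) : ℤ) - ((k : ℕ) : ℤ)) + (n : ℤ) * 1 := by
      have hk : (k : ℕ) ≤ n := k.isLt.le
      omega
    rw [this, psi_add, psi_n_mul n hn, mul_one]

lemma conj_psi (n : ℕ) (j : Fin n) (m : ℤ) :
    (starRingEnd ℂ) (psi n j m) = psi n j (-m) := by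
  rw [psi, psi, ← Complex.exp_conj]
  congr 1
  simp [map_div₀, Complex.conj_I, map_ofNat]

/-- Orthogonality of characters. -/
lemma sum_psi_mul (n : ℕ) (hn : 0 < n) (j j' : Fin n) :
    ∑ k : Fin n, (starRingEnd ℂ) (psi n j ((k : ℕ) : ℤ)) * psi n j' ((k : ℕ) : ℤ)
      = if j = j' then (n : ℂ) else 0 := by
  have hn' : (n : ℂ) ≠ 0 := Nat.cast_ne_zero.mpr hn.ne'
  set δ : ℤ := ((j' : ℕ) : ℤ) - ((j : ℕ) : ℤ) with hδ
  set ζ : ℂ := Complex.exp (2 * (Real.pi : ℂ) * Complex.I * (δ : ℂ) / (n : ℂ)) with hζ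
  have hterm : ∀ k : Fin n,
      (starRingEnd ℂ) (psi n j ((k : ℕ) : ℤ)) * psi n j' ((k : ℕ) : ℤ) = ζ ^ (k : ℕ) := by
    intro k
    rw [conj_psi, psi, psi, ← Complex.exp_add, hζ, ← Complex.exp_nat_mul]
    congr 1
    push_cast [hδ]
    field_simp
    ring
  rw [Finset.sum_congr rfl (fun k _ => hterm k)]
  by_cases hjj : j = j'
  · subst hjj
    have : ζ = 1 := by
      rw [hζ]
      have : δ = 0 := by simp [hδ]
      rw [this]
      simp
    simp [this]
  · have hδ0 : δ ≠ 0 := by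
      simp only [hδ, sub_ne_zero]
      exact_mod_cast fun h => hjj (Fin.ext (by exact_mod_cast h.symm))
    have hδlt : δ.natAbs < n := by
      have := j.isLt; have := j'.isLt
      omega
    have h2πI : (2 * (Real.pi : ℂ) * Complex.I) ≠ 0 := by
      simp [Real.pi_ne_zero, Complex.I_ne_zero, Complex.ofReal_ne_zero]
    have hζ1 : ζ ≠ 1 := by
      intro h
      rw [hζ, Complex.exp_eq_one_iff] at h
      obtain ⟨t, ht⟩ := h
      rw [div_eq_iff hn'] at ht
      have h3 : (δ : ℂ) * (2 * (Real.pi : ℂ) * Complex.I) = ((t * n : ℤ) : ℂ) * (2 * (Real.pi : ℂ) * Complex.I) := by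
        push_cast
        linear_combination ht
      have h4 : (δ : ℂ) = ((t * n : ℤ) : ℂ) := mul_right_cancel₀ h2πI h3
      have h5 : δ = t * n := by exact_mod_cast h4
      have hdvd : ((n : ℤ)).natAbs ∣ δ.natAbs := by
        exact Int.natAbs_dvd_natAbs.mpr ⟨t, by rw [h5]; ring⟩
      simp only [Int.natAbs_natCast] at hdvd
      have := Nat.le_of_dvd (by omega) hdvd
      omega
    have hζn : ζ ^ n = 1 := by
      rw [hζ, ← Complex.exp_nat_mul]
      have : (n : ℂ) * (2 * (Real.pi : ℂ) * Complex.I * (δ : ℂ) / (n : ℂ))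
          = (δ : ℂ) * (2 * (Real.pi : ℂ) * Complex.I) := by field_simp
      rw [this, Complex.exp_int_mul_two_pi_mul_I]
    rw [Fin.sum_univ_eq_sum_range (fun i => ζ ^ i) n, geom_sum_eq hζ1, hζn]
    simp [hjj]



lemma fiber_sum (n : ℕ) (hn : 0 < n) (z : ℂ) (k : Fin n) :
    ∑ q : Fin n, z ^ ((((q + k : Fin n) : ℕ) : ℤ) - ((q : ℕ) : ℤ))
      = ((n : ℂ) - ((k : ℕ) : ℂ)) * z ^ (((k : ℕ) : ℤ)) + ((k : ℕ) : ℂ) * z ^ (((k : ℕ) : ℤ) - (n : ℤ)) := by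
  have hk := k.isLt
  have hstep : ∀ q : Fin n, z ^ ((((q + k : Fin n) : ℕ) : ℤ) - ((q : ℕ) : ℤ))
      = if (q : ℕ) + (k : ℕ) < n then z ^ (((k : ℕ) : ℤ)) else z ^ (((k : ℕ) : ℤ) - (n : ℤ)) := by
    intro q
    have hadd : ((q + k : Fin n) : ℕ) = ((q : ℕ) + (k : ℕ)) % n := Fin.val_add q k
    split_ifs with h
    · rw [hadd, Nat.mod_eq_of_lt h]
      congr 1
      omega
    · push_neg at h
      have h2 : ((q : ℕ) + (k : ℕ)) % n = (q : ℕ) + (k : ℕ) - n := by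
        have hq := q.isLt
        rw [Nat.mod_eq_sub_mod h, Nat.mod_eq_of_lt (by omega)]
      rw [hadd, h2]
      congr 1
      have hq := q.isLt
      omega
  calc ∑ q : Fin n, z ^ ((((q + k : Fin n) : ℕ) : ℤ) - ((q : ℕ) : ℤ))
      = ∑ q : Fin n, (if (q : ℕ) + (k : ℕ) < n then z ^ (((k : ℕ) : ℤ)) else z ^ (((k : ℕ) : ℤ) - (n : ℤ))) :=
        Finset.sum_congr rfl (fun q _ => hstep q)
    _ = ∑ i ∈ Finset.range n, (if i + (k : ℕ) < n then z ^ (((k : ℕ) : ℤ)) else z ^ (((k : ℕ) : ℤ) - (n : ℤ))) :=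
        Fin.sum_univ_eq_sum_range (fun i => if i + (k : ℕ) < n then z ^ (((k : ℕ) : ℤ)) else z ^ (((k : ℕ) : ℤ) - (n : ℤ))) n
    _ = ∑ i ∈ Finset.Ico 0 (n - (k : ℕ)), (if i + (k : ℕ) < n then z ^ (((k : ℕ) : ℤ)) else z ^ (((k : ℕ) : ℤ) - (n : ℤ)))
        + ∑ i ∈ Finset.Ico (n - (k : ℕ)) n, (if i + (k : ℕ) < n then z ^ (((k : ℕ) : ℤ)) else z ^ (((k : ℕ) : ℤ) - (n : ℤ))) := by
        rw [Finset.range_eq_Ico, ← Finset.sum_Ico_consecutive _ (Nat.zero_le (n - (k : ℕ))) (Nat.sub_le n (k : ℕ))]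
    _ = ∑ i ∈ Finset.Ico 0 (n - (k : ℕ)), z ^ (((k : ℕ) : ℤ))
        + ∑ i ∈ Finset.Ico (n - (k : ℕ)) n, z ^ (((k : ℕ) : ℤ) - (n : ℤ)) := by
        congr 1
        · exact Finset.sum_congr rfl (fun i hi => if_pos (by rw [Finset.mem_Ico] at hi; omega))
        · exact Finset.sum_congr rfl (fun i hi => if_neg (by rw [Finset.mem_Ico] at hi; omega))
    _ = ((n : ℂ) - ((k : ℕ) : ℂ)) * z ^ (((k : ℕ) : ℤ)) + ((k : ℕ) : ℂ) * z ^ (((k : ℕ) : ℤ) - (n : ℤ)) := by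
        rw [Finset.sum_const, Finset.sum_const, Nat.card_Ico, Nat.card_Ico, nsmul_eq_mul, nsmul_eq_mul]
        congr 2
        · have h0 : n - (k : ℕ) - 0 = n - (k : ℕ) := by omega
          rw [h0]
          push_cast [Nat.cast_sub hk.le]
          ring
        · congr 1
          omega

lemma lemmaA (n : ℕ) (hn : 0 < n) (z : ℂ) (hz : z ≠ 0) :
    ∑ k : Fin n, (((n : ℂ) - ((k : ℕ) : ℂ)) * z ^ (((k : ℕ) : ℤ)) + ((k : ℕ) : ℂ) * z ^ (((k : ℕ) : ℤ) - (n : ℤ)))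
      = (∑ p : Fin n, z ^ ((p : ℕ))) * (∑ q : Fin n, z ^ (-((q : ℕ) : ℤ))) := by
  haveI : NeZero n := ⟨hn.ne'⟩
  rw [Finset.sum_mul_sum]
  have hRHS : ∀ p q : Fin n, z ^ ((p : ℕ)) * z ^ (-((q : ℕ) : ℤ)) = z ^ (((p : ℕ) : ℤ) - ((q : ℕ) : ℤ)) := by
    intro p q
    rw [← zpow_natCast z (p : ℕ), ← zpow_add₀ hz, sub_eq_add_neg]
  calc ∑ k : Fin n, (((n : ℂ) - ((k : ℕ) : ℂ)) * z ^ (((k : ℕ) : ℤ)) + ((k : ℕ) : ℂ) * z ^ (((k : ℕ) : ℤ) - (n : ℤ)))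
      = ∑ k : Fin n, ∑ q : Fin n, z ^ ((((q + k : Fin n) : ℕ) : ℤ) - ((q : ℕ) : ℤ)) :=
        (Finset.sum_congr rfl (fun k _ => (fiber_sum n hn z k).symm))
    _ = ∑ q : Fin n, ∑ k : Fin n, z ^ ((((q + k : Fin n) : ℕ) : ℤ) - ((q : ℕ) : ℤ)) := Finset.sum_comm
    _ = ∑ q : Fin n, ∑ p : Fin n, z ^ (((p : ℕ) : ℤ) - ((q : ℕ) : ℤ)) := by
        refine Finset.sum_congr rfl (fun q _ => ?_)
        exact Fintype.sum_equiv (Equiv.addLeft q) _ _ (fun k => rfl)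
    _ = ∑ p : Fin n, ∑ q : Fin n, z ^ (((p : ℕ) : ℤ) - ((q : ℕ) : ℤ)) := Finset.sum_comm
    _ = ∑ p : Fin n, ∑ q : Fin n, z ^ ((p : ℕ)) * z ^ (-((q : ℕ) : ℤ)) :=
        Finset.sum_congr rfl (fun p _ => Finset.sum_congr rfl (fun q _ => (hRHS p q).symm))



/-- The (unnormalized) eigenvector. -/
def vvec (n : ℕ) (j : Fin n) : Fin n → ℂ := fun k => psi n j ((k : ℕ) : ℤ)

lemma spec_le_of_eigen {n : ℕ} (hn : 0 < n) (A : Matrix (Fin n) (Fin n) ℂ) (μ : Fin n → ℂ)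
    (heig : ∀ j, A.mulVec (vvec n j) = μ j • vvec n j)
    (R : ℝ) (hR : 0 ≤ R) (hμ : ∀ j, ‖μ j‖ ≤ R) : spec A ≤ R := by
  haveI : NeZero n := ⟨hn.ne'⟩
  have hn' : (n : ℂ) ≠ 0 := Nat.cast_ne_zero.mpr hn.ne'
  set c : ℂ := Complex.ofReal ((Real.sqrt n)⁻¹) with hc
  have hcc : (starRingEnd ℂ) c * c = (n : ℂ)⁻¹ := by
    rw [hc, Complex.conj_ofReal, ← Complex.ofReal_mul, ← mul_inv,
      Real.mul_self_sqrt (Nat.cast_nonneg n)]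
    push_cast
    ring
  set u : Fin n → EuclideanSpace ℂ (Fin n) :=
    fun j => c • (WithLp.equiv 2 (Fin n → ℂ)).symm (vvec n j) with hu
  have hinner : ∀ j j', (inner ℂ (u j) (u j')) = if j = j' then 1 else 0 := by
    intro j j'
    rw [hu]
    simp only [inner_smul_left, inner_smul_right]
    have : (inner ℂ ((WithLp.equiv 2 (Fin n → ℂ)).symm (vvec n j))
        ((WithLp.equiv 2 (Fin n → ℂ)).symm (vvec n j')))
        = ∑ k : Fin n, (starRingEnd ℂ) (vvec n j k) * vvec n j' k := by
      rw [PiLp.inner_apply]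
      exact Finset.sum_congr rfl (fun k _ => RCLike.inner_apply' _ _)
    rw [this]
    simp only [vvec]
    rw [sum_psi_mul n hn j j']
    split_ifs with h
    · calc c * ((starRingEnd ℂ) c * (n : ℂ)) = ((starRingEnd ℂ) c * c) * n := by ring
        _ = 1 := by rw [hcc]; exact inv_mul_cancel₀ hn'
    · ring
  have hon : Orthonormal ℂ u := by
    rw [orthonormal_iff_ite]
    exact hinner
  have hcard : Fintype.card (Fin n) = Module.finrank ℂ (EuclideanSpace ℂ (Fin n)) := by
    rw [finrank_euclideanSpace]
  haveI : Nonempty (Fin n) := ⟨⟨0, hn⟩⟩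
  have hsp : ⊤ ≤ Submodule.span ℂ (Set.range u) := by
    have b0 := basisOfLinearIndependentOfCardEqFinrank hon.linearIndependent hcard
    have hb0 : ⇑(basisOfLinearIndependentOfCardEqFinrank hon.linearIndependent hcard) = u :=
      coe_basisOfLinearIndependentOfCardEqFinrank _ _
    rw [← hb0, (basisOfLinearIndependentOfCardEqFinrank hon.linearIndependent hcard).span_eq]
  set b : OrthonormalBasis (Fin n) ℂ (EuclideanSpace ℂ (Fin n)) := OrthonormalBasis.mk hon hsp with hb
  have hbu : ∀ j, b j = u j := by intro j; rw [hb, OrthonormalBasis.coe_mk]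
  set T := (Matrix.toEuclideanCLM (𝕜 := ℂ) A :
    EuclideanSpace ℂ (Fin n) →L[ℂ] EuclideanSpace ℂ (Fin n)) with hT
  have hTu : ∀ j, T (u j) = μ j • u j := by
    intro j
    rw [hu]
    simp only [map_smul]
    rw [hT, WithLp.equiv_symm_apply, Matrix.toEuclideanCLM_toLp, heig j,
      WithLp.toLp_smul]
    rw [smul_comm]
  have helper : ∀ d : Fin n → ℂ, ‖∑ j : Fin n, d j • u j‖ ^ 2 = ∑ j : Fin n, ‖d j‖ ^ 2 := by
    intro d
    have h1 : (inner ℂ (∑ j : Fin n, d j • u j) (∑ j : Fin n, d j • u j))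
        = (((∑ j : Fin n, ‖d j‖ ^ 2 : ℝ)) : ℂ) := by
      rw [hon.inner_sum]
      rw [Finset.sum_congr rfl (fun j _ => by
        rw [mul_comm, Complex.mul_conj, Complex.normSq_eq_norm_sq])]
      push_cast
      rfl
    calc ‖∑ j : Fin n, d j • u j‖ ^ 2
        = RCLike.re (inner ℂ (∑ j : Fin n, d j • u j) (∑ j : Fin n, d j • u j)) :=
          (inner_self_eq_norm_sq (𝕜 := ℂ) _).symm
      _ = RCLike.re (((∑ j : Fin n, ‖d j‖ ^ 2 : ℝ)) : ℂ) := by rw [h1]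
      _ = ∑ j : Fin n, ‖d j‖ ^ 2 := by exact Complex.ofReal_re _
  refine ContinuousLinearMap.opNorm_le_bound T hR (fun x => ?_)
  set y : Fin n → ℂ := fun j => b.repr x j with hy
  have hxsum : ∑ j : Fin n, y j • u j = x := by
    conv_rhs => rw [← b.sum_repr x]
    exact Finset.sum_congr rfl (fun j _ => by rw [hbu j])
  have hTx : T x = ∑ j : Fin n, (y j * μ j) • u j := by
    rw [← hxsum, map_sum]
    refine Finset.sum_congr rfl (fun j _ => ?_)
    rw [map_smul, hTu j, smul_smul]
  have hnormx : ‖x‖ ^ 2 = ∑ j : Fin n, ‖y j‖ ^ 2 := by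
    rw [← hxsum]; exact helper y
  have hTx2 : ‖T x‖ ^ 2 = ∑ j : Fin n, ‖y j * μ j‖ ^ 2 := by
    rw [hTx]; exact helper _
  have hle : ‖T x‖ ^ 2 ≤ (R * ‖x‖) ^ 2 := by
    rw [hTx2, mul_pow, hnormx, Finset.mul_sum]
    refine Finset.sum_le_sum (fun j _ => ?_)
    rw [norm_mul]
    calc (‖y j‖ * ‖μ j‖) ^ 2 = ‖μ j‖ ^ 2 * ‖y j‖ ^ 2 := by ring
      _ ≤ R ^ 2 * ‖y j‖ ^ 2 := by
          apply mul_le_mul_of_nonneg_right _ (by positivity)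
          exact pow_le_pow_left₀ (norm_nonneg _) (hμ j) 2
  calc ‖T x‖ = Real.sqrt (‖T x‖ ^ 2) := (Real.sqrt_sq (norm_nonneg _)).symm
    _ ≤ Real.sqrt ((R * ‖x‖) ^ 2) := Real.sqrt_le_sqrt hle
    _ = R * ‖x‖ := Real.sqrt_sq (by positivity)



/-- First column of the optimal circulant preconditioner. -/
def col (f : ℝ → ℂ) (n : ℕ) : Fin n → ℂ := fun k =>
  (((n : ℂ) - ((k : ℕ) : ℂ)) * fourierCoeff' f ((k : ℕ) : ℤ)
    + ((k : ℕ) : ℂ) * fourierCoeff' f (((k : ℕ) : ℤ) - (n : ℤ))) / (n : ℂ)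

/-- The eigenvalue of the circulant. -/
def lam (f : ℝ → ℂ) (n : ℕ) (j : Fin n) : ℂ :=
  ∑ k : Fin n, col f n k * psi n j (-((k : ℕ) : ℤ))

lemma eigen (f : ℝ → ℂ) (n : ℕ) (hn : 0 < n) (j : Fin n) :
    (optCirculant f n).mulVec (vvec n j) = lam f n j • vvec n j := by
  haveI : NeZero n := ⟨hn.ne'⟩
  funext p
  have hM : optCirculant f n = Matrix.circulant (col f n) := rfl
  rw [hM]
  show ∑ q : Fin n, Matrix.circulant (col f n) p q * vvec n j q = _
  calc ∑ q : Fin n, Matrix.circulant (col f n) p q * vvec n j q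
      = ∑ q : Fin n, col f n (p - q) * psi n j ((q : ℕ) : ℤ) := by
        refine Finset.sum_congr rfl (fun q _ => ?_)
        rw [Matrix.circulant_apply]
        rfl
    _ = ∑ k : Fin n, col f n (p - (p - k)) * psi n j (((p - k : Fin n) : ℕ) : ℤ) :=
        Fintype.sum_equiv (Equiv.subLeft p) _ _ (fun q => by simp only [Equiv.subLeft_apply, sub_sub_cancel])
    _ = ∑ k : Fin n, col f n k * (psi n j ((p : ℕ) : ℤ) * psi n j (-((k : ℕ) : ℤ))) := by
        refine Finset.sum_congr rfl (fun k _ => ?_)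
        rw [sub_sub_cancel, psi_fin_sub n hn j p k, show ((p : ℕ) : ℤ) - ((k : ℕ) : ℤ)
          = ((p : ℕ) : ℤ) + (-((k : ℕ) : ℤ)) from sub_eq_add_neg _ _, psi_add]
    _ = lam f n j * psi n j ((p : ℕ) : ℤ) := by
        rw [lam, Finset.sum_mul]
        refine Finset.sum_congr rfl (fun k _ => ?_)
        ring
    _ = (lam f n j • vvec n j) p := rfl



/-- The base point z = e^{-iθ - 2πij/n}. -/
def wz (n : ℕ) (j : Fin n) (θ : ℝ) : ℂ :=
  Complex.exp (-(Complex.I * θ) - 2 * (Real.pi : ℂ) * Complex.I * ((j : ℕ) : ℂ) / (n : ℂ))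

def Sz (n : ℕ) (j : Fin n) (θ : ℝ) : ℂ := ∑ p : Fin n, wz n j θ ^ (p : ℕ)

/-- The (real, nonnegative) Fejér-type kernel. -/
def Kr (n : ℕ) (j : Fin n) (θ : ℝ) : ℝ := ‖Sz n j θ‖ ^ 2 / n

lemma wz_ne (n : ℕ) (j : Fin n) (θ : ℝ) : wz n j θ ≠ 0 := Complex.exp_ne_zero _

lemma wz_zpow (n : ℕ) (j : Fin n) (θ : ℝ) (m : ℤ) :
    wz n j θ ^ m = Complex.exp ((m : ℂ) * (-(Complex.I * θ)
      - 2 * (Real.pi : ℂ) * Complex.I * ((j : ℕ) : ℂ) / (n : ℂ))) :=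
  (Complex.exp_int_mul _ m).symm

lemma wz_cont (n : ℕ) (j : Fin n) : Continuous (fun θ => wz n j θ) := by
  unfold wz
  fun_prop

lemma wz_zpow_cont (n : ℕ) (j : Fin n) (m : ℤ) :
    Continuous (fun θ => wz n j θ ^ m) := by
  have : (fun θ => wz n j θ ^ m) = fun θ : ℝ => Complex.exp ((m : ℂ) * (-(Complex.I * (θ : ℂ))
      - 2 * (Real.pi : ℂ) * Complex.I * ((j : ℕ) : ℂ) / (n : ℂ))) :=
    funext (fun θ => wz_zpow n j θ m)
  rw [this]
  fun_prop

lemma Sz_cont (n : ℕ) (j : Fin n) : Continuous (fun θ => Sz n j θ) := by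
  unfold Sz
  exact continuous_finset_sum _ (fun p _ => (wz_cont n j).pow _)

lemma Kr_cont (n : ℕ) (j : Fin n) : Continuous (fun θ => Kr n j θ) := by
  unfold Kr
  exact (((Sz_cont n j).norm).pow 2).div_const _

lemma Kr_nonneg (n : ℕ) (j : Fin n) (θ : ℝ) : 0 ≤ Kr n j θ := by
  unfold Kr
  positivity

lemma wz_pow_nat (n : ℕ) (hn : 0 < n) (j : Fin n) (θ : ℝ) (m : ℕ) :
    wz n j θ ^ m = Complex.exp (-Complex.I * (((m : ℤ) : ℂ)) * θ) * psi n j (-(m : ℤ)) := by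
  rw [wz, ← Complex.exp_nat_mul, psi, ← Complex.exp_add]
  congr 1
  push_cast
  ring

lemma wz_zpow_sub (n : ℕ) (hn : 0 < n) (j : Fin n) (θ : ℝ) (m : ℕ) :
    wz n j θ ^ ((m : ℤ) - (n : ℤ)) = Complex.exp (-Complex.I * ((((m : ℤ) - (n : ℤ) : ℤ)) : ℂ) * θ)
      * psi n j (-(m : ℤ)) := by
  have hn' : (n : ℂ) ≠ 0 := Nat.cast_ne_zero.mpr hn.ne'
  rw [wz_zpow, psi, ← Complex.exp_add]
  rw [show ((((m : ℤ) - (n : ℤ) : ℤ)) : ℂ) * (-(Complex.I * θ)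
      - 2 * (Real.pi : ℂ) * Complex.I * ((j : ℕ) : ℂ) / (n : ℂ))
      = (-Complex.I * ((((m : ℤ) - (n : ℤ) : ℤ)) : ℂ) * θ
        + 2 * (Real.pi : ℂ) * Complex.I * ((j : ℕ) : ℂ) * ((-(m : ℤ) : ℤ) : ℂ) / (n : ℂ))
        + (((j : ℕ) : ℤ) : ℂ) * (2 * (Real.pi : ℂ) * Complex.I) from by
    field_simp
    push_cast
    ring]
  rw [Complex.exp_add, Complex.exp_int_mul_two_pi_mul_I, mul_one]

lemma conj_wz (n : ℕ) (j : Fin n) (θ : ℝ) :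
    (starRingEnd ℂ) (wz n j θ) = (wz n j θ)⁻¹ := by
  rw [wz, ← Complex.exp_conj, ← Complex.exp_neg]
  congr 1
  simp [map_div₀, map_ofNat, Complex.conj_I, Complex.conj_ofReal]
  ring

lemma conj_Sz (n : ℕ) (j : Fin n) (θ : ℝ) :
    ∑ q : Fin n, wz n j θ ^ (-((q : ℕ) : ℤ)) = (starRingEnd ℂ) (Sz n j θ) := by
  rw [Sz, map_sum]
  refine Finset.sum_congr rfl (fun q _ => ?_)
  rw [map_pow, conj_wz, inv_pow, ← zpow_natCast, ← zpow_neg]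

/-- Summing the circulant symbol gives the Fejér kernel. -/
lemma sum_G (n : ℕ) (hn : 0 < n) (j : Fin n) (θ : ℝ) :
    ∑ k : Fin n, (1 / (n : ℂ)) * (((n : ℂ) - ((k : ℕ) : ℂ)) * wz n j θ ^ ((k : ℕ))
        + ((k : ℕ) : ℂ) * wz n j θ ^ (((k : ℕ) : ℤ) - (n : ℤ)))
      = ((Kr n j θ : ℝ) : ℂ) := by
  have hn' : (n : ℂ) ≠ 0 := Nat.cast_ne_zero.mpr hn.ne'
  rw [← Finset.mul_sum]
  have h1 : ∑ k : Fin n, (((n : ℂ) - ((k : ℕ) : ℂ)) * wz n j θ ^ ((k : ℕ))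
      + ((k : ℕ) : ℂ) * wz n j θ ^ (((k : ℕ) : ℤ) - (n : ℤ)))
      = ∑ k : Fin n, (((n : ℂ) - ((k : ℕ) : ℂ)) * wz n j θ ^ (((k : ℕ) : ℤ))
      + ((k : ℕ) : ℂ) * wz n j θ ^ (((k : ℕ) : ℤ) - (n : ℤ))) := by
    refine Finset.sum_congr rfl (fun k _ => ?_)
    rw [zpow_natCast]
  rw [h1, lemmaA n hn _ (wz_ne n j θ), conj_Sz]
  rw [show (∑ p : Fin n, wz n j θ ^ (p : ℕ)) = Sz n j θ from rfl]
  rw [Complex.mul_conj, Kr]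
  rw [Complex.normSq_eq_norm_sq]
  push_cast
  ring

lemma intW (n : ℕ) (j : Fin n) (m : ℤ) :
    (∫ θ in (-Real.pi)..Real.pi, wz n j θ ^ m)
      = if m = 0 then ((2 * Real.pi : ℝ) : ℂ) else 0 := by
  split_ifs with hm
  · subst hm
    simp only [zpow_zero]
    rw [intervalIntegral.integral_const, Complex.real_smul, mul_one]
    push_cast
    ring
  · have key : ∀ θ : ℝ, wz n j θ ^ m
        = Complex.exp (-(2 * (Real.pi : ℂ) * Complex.I * ((j : ℕ) : ℂ) * (m : ℂ) / (n : ℂ)))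
          * Complex.exp ((-(Complex.I) * (m : ℂ)) * θ) := by
      intro θ
      rw [wz_zpow, ← Complex.exp_add]
      congr 1
      ring
    rw [intervalIntegral.integral_congr (fun θ _ => key θ)]
    rw [intervalIntegral.integral_const_mul]
    have hc : (-(Complex.I) * (m : ℂ)) ≠ 0 := by
      simp [Complex.I_ne_zero]
      exact_mod_cast hm
    rw [integral_exp_mul_complex hc]
    set ζ : ℂ := Complex.exp (Complex.I * (m : ℂ) * (Real.pi : ℂ)) with hζ
    have hζζ : ζ * ζ = 1 := by
      rw [hζ, ← Complex.exp_add]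
      rw [show Complex.I * (m : ℂ) * (Real.pi : ℂ) + Complex.I * (m : ℂ) * (Real.pi : ℂ)
          = (m : ℂ) * (2 * (Real.pi : ℂ) * Complex.I) from by ring]
      exact Complex.exp_int_mul_two_pi_mul_I m
    have h1 : Complex.exp ((-(Complex.I) * (m : ℂ)) * ((Real.pi : ℝ) : ℂ)) = ζ⁻¹ := by
      rw [hζ, ← Complex.exp_neg]
      congr 1
      ring
    have h2 : Complex.exp ((-(Complex.I) * (m : ℂ)) * ((-Real.pi : ℝ) : ℂ)) = ζ := by
      rw [hζ]
      congr 1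
      push_cast
      ring
    rw [h1, h2, inv_eq_of_mul_eq_one_left hζζ]
    simp

lemma intKr (n : ℕ) (hn : 0 < n) (j : Fin n) :
    (∫ θ in (-Real.pi)..Real.pi, Kr n j θ) = 2 * Real.pi := by
  have hn' : (n : ℂ) ≠ 0 := Nat.cast_ne_zero.mpr hn.ne'
  have hKc : ∀ θ : ℝ, ((Kr n j θ : ℝ) : ℂ)
      = (∑ p : Fin n, ∑ q : Fin n, wz n j θ ^ (((p : ℕ) : ℤ) - ((q : ℕ) : ℤ))) / (n : ℂ) := by
    intro θ
    have e1 : ((Kr n j θ : ℝ) : ℂ) = ((Complex.normSq (Sz n j θ) : ℝ) : ℂ) / (n : ℂ) := by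
      rw [Kr, Complex.normSq_eq_norm_sq]
      push_cast
      ring
    rw [e1, ← Complex.mul_conj, ← conj_Sz]
    rw [show Sz n j θ = ∑ p : Fin n, wz n j θ ^ ((p : ℕ) : ℤ) from by
      rw [Sz]; exact Finset.sum_congr rfl (fun p _ => (zpow_natCast _ _).symm)]
    rw [Finset.sum_mul_sum]
    congr 1
    refine Finset.sum_congr rfl (fun p _ => Finset.sum_congr rfl (fun q _ => ?_))
    rw [← zpow_add₀ (wz_ne n j θ), sub_eq_add_neg]
  have hint : (∫ θ in (-Real.pi)..Real.pi, ((Kr n j θ : ℝ) : ℂ)) = ((2 * Real.pi : ℝ) : ℂ) := by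
    rw [intervalIntegral.integral_congr (fun θ _ => hKc θ)]
    rw [intervalIntegral.integral_div]
    rw [intervalIntegral.integral_finset_sum
      (fun p _ => (continuous_finset_sum _
        (fun q _ => wz_zpow_cont n j _)).intervalIntegrable _ _)]
    rw [Finset.sum_congr rfl (fun p _ => intervalIntegral.integral_finset_sum
      (fun q _ => (wz_zpow_cont n j _).intervalIntegrable _ _))]
    rw [Finset.sum_congr rfl (fun p _ => Finset.sum_congr rfl (fun q _ => intW n j _))]
    rw [Finset.sum_congr rfl (fun p _ => Finset.sum_eq_single p
      (fun q _ hq => by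
        rw [if_neg]
        intro h
        exact hq (Fin.ext (by omega)))
      (fun h => absurd (Finset.mem_univ p) h))]
    rw [Finset.sum_congr rfl (fun p _ => by rw [if_pos (sub_self ((p : ℕ) : ℤ))]),
      Finset.sum_const, Finset.card_univ, Fintype.card_fin, nsmul_eq_mul]
    field_simp
  rw [intervalIntegral.integral_ofReal] at hint
  exact_mod_cast hint

lemma col_psi (f : ℝ → ℂ) (hf : Continuous f) (n : ℕ) (hn : 0 < n) (j k : Fin n) :
    col f n k * psi n j (-((k : ℕ) : ℤ))
      = (1 / (2 * (Real.pi : ℂ))) * ∫ θ in (-Real.pi)..Real.pi,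
          f θ * ((1 / (n : ℂ)) * (((n : ℂ) - ((k : ℕ) : ℂ)) * wz n j θ ^ ((k : ℕ))
            + ((k : ℕ) : ℂ) * wz n j θ ^ (((k : ℕ) : ℤ) - (n : ℤ)))) := by
  have hn' : (n : ℂ) ≠ 0 := Nat.cast_ne_zero.mpr hn.ne'
  have hc1 : Continuous (fun θ : ℝ => (((n : ℂ) - ((k : ℕ) : ℂ)) * psi n j (-((k : ℕ) : ℤ)) / (n : ℂ))
      * (f θ * Complex.exp (-Complex.I * ((((k : ℕ) : ℤ)) : ℂ) * (θ : ℂ)))) := by fun_prop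
  have hc2 : Continuous (fun θ : ℝ => (((k : ℕ) : ℂ) * psi n j (-((k : ℕ) : ℤ)) / (n : ℂ))
      * (f θ * Complex.exp (-Complex.I * (((((k : ℕ) : ℤ) - (n : ℤ) : ℤ)) : ℂ) * (θ : ℂ)))) := by fun_prop
  calc col f n k * psi n j (-((k : ℕ) : ℤ))
      = (1 / (2 * (Real.pi : ℂ))) *
          ((((n : ℂ) - ((k : ℕ) : ℂ)) * psi n j (-((k : ℕ) : ℤ)) / (n : ℂ))
            * (∫ θ in (-Real.pi)..Real.pi, f θ * Complex.exp (-Complex.I * ((((k : ℕ) : ℤ)) : ℂ) * (θ : ℂ)))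
          + (((k : ℕ) : ℂ) * psi n j (-((k : ℕ) : ℤ)) / (n : ℂ))
            * (∫ θ in (-Real.pi)..Real.pi, f θ * Complex.exp (-Complex.I * (((((k : ℕ) : ℤ) - (n : ℤ) : ℤ)) : ℂ) * (θ : ℂ)))) := by
        rw [col, fourierCoeff', fourierCoeff']
        ring
    _ = (1 / (2 * (Real.pi : ℂ))) *
          ((∫ θ in (-Real.pi)..Real.pi, (((n : ℂ) - ((k : ℕ) : ℂ)) * psi n j (-((k : ℕ) : ℤ)) / (n : ℂ))
            * (f θ * Complex.exp (-Complex.I * ((((k : ℕ) : ℤ)) : ℂ) * (θ : ℂ))))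
          + (∫ θ in (-Real.pi)..Real.pi, (((k : ℕ) : ℂ) * psi n j (-((k : ℕ) : ℤ)) / (n : ℂ))
            * (f θ * Complex.exp (-Complex.I * (((((k : ℕ) : ℤ) - (n : ℤ) : ℤ)) : ℂ) * (θ : ℂ))))) := by
        rw [intervalIntegral.integral_const_mul, intervalIntegral.integral_const_mul]
    _ = (1 / (2 * (Real.pi : ℂ))) *
          ∫ θ in (-Real.pi)..Real.pi, ((((n : ℂ) - ((k : ℕ) : ℂ)) * psi n j (-((k : ℕ) : ℤ)) / (n : ℂ))
            * (f θ * Complex.exp (-Complex.I * ((((k : ℕ) : ℤ)) : ℂ) * (θ : ℂ)))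
          + (((k : ℕ) : ℂ) * psi n j (-((k : ℕ) : ℤ)) / (n : ℂ))
            * (f θ * Complex.exp (-Complex.I * (((((k : ℕ) : ℤ) - (n : ℤ) : ℤ)) : ℂ) * (θ : ℂ)))) := by
        rw [intervalIntegral.integral_add (hc1.intervalIntegrable _ _) (hc2.intervalIntegrable _ _)]
    _ = (1 / (2 * (Real.pi : ℂ))) * ∫ θ in (-Real.pi)..Real.pi,
          f θ * ((1 / (n : ℂ)) * (((n : ℂ) - ((k : ℕ) : ℂ)) * wz n j θ ^ ((k : ℕ))
            + ((k : ℕ) : ℂ) * wz n j θ ^ (((k : ℕ) : ℤ) - (n : ℤ)))) := by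
        congr 1
        refine intervalIntegral.integral_congr (fun θ _ => ?_)
        rw [wz_pow_nat n hn j θ (k : ℕ), wz_zpow_sub n hn j θ (k : ℕ)]
        ring

lemma lam_eq (f : ℝ → ℂ) (hf : Continuous f) (n : ℕ) (hn : 0 < n) (j : Fin n) :
    lam f n j = (1 / (2 * (Real.pi : ℂ))) * ∫ θ in (-Real.pi)..Real.pi,
      f θ * ((Kr n j θ : ℝ) : ℂ) := by
  have hGkc : ∀ k : Fin n, Continuous (fun θ : ℝ =>
      f θ * ((1 / (n : ℂ)) * (((n : ℂ) - ((k : ℕ) : ℂ)) * wz n j θ ^ ((k : ℕ))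
        + ((k : ℕ) : ℂ) * wz n j θ ^ (((k : ℕ) : ℤ) - (n : ℤ))))) := by
    intro k
    exact hf.mul (continuous_const.mul (((continuous_const.mul ((wz_cont n j).pow _)).add
      (continuous_const.mul (wz_zpow_cont n j _)))))
  calc lam f n j
      = ∑ k : Fin n, (1 / (2 * (Real.pi : ℂ))) * ∫ θ in (-Real.pi)..Real.pi,
          f θ * ((1 / (n : ℂ)) * (((n : ℂ) - ((k : ℕ) : ℂ)) * wz n j θ ^ ((k : ℕ))
            + ((k : ℕ) : ℂ) * wz n j θ ^ (((k : ℕ) : ℤ) - (n : ℤ)))) := by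
        rw [lam]
        exact Finset.sum_congr rfl (fun k _ => col_psi f hf n hn j k)
    _ = (1 / (2 * (Real.pi : ℂ))) * ∑ k : Fin n, ∫ θ in (-Real.pi)..Real.pi,
          f θ * ((1 / (n : ℂ)) * (((n : ℂ) - ((k : ℕ) : ℂ)) * wz n j θ ^ ((k : ℕ))
            + ((k : ℕ) : ℂ) * wz n j θ ^ (((k : ℕ) : ℤ) - (n : ℤ)))) := by
        rw [Finset.mul_sum]
    _ = (1 / (2 * (Real.pi : ℂ))) * ∫ θ in (-Real.pi)..Real.pi, ∑ k : Fin n,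
          f θ * ((1 / (n : ℂ)) * (((n : ℂ) - ((k : ℕ) : ℂ)) * wz n j θ ^ ((k : ℕ))
            + ((k : ℕ) : ℂ) * wz n j θ ^ (((k : ℕ) : ℤ) - (n : ℤ)))) := by
        rw [intervalIntegral.integral_finset_sum
          (fun k _ => (hGkc k).intervalIntegrable _ _)]
    _ = (1 / (2 * (Real.pi : ℂ))) * ∫ θ in (-Real.pi)..Real.pi,
          f θ * ((Kr n j θ : ℝ) : ℂ) := by
        congr 1
        refine intervalIntegral.integral_congr (fun θ _ => ?_)
        rw [← Finset.mul_sum, sum_G n hn j θ]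

lemma supNorm_nonneg (f : ℝ → ℂ) : 0 ≤ supNorm f :=
  Real.iSup_nonneg (fun θ => norm_nonneg _)

lemma norm_le_supNorm (f : ℝ → ℂ) (hf : Continuous f) (θ : ℝ)
    (hθ : θ ∈ Set.Icc (-Real.pi) Real.pi) : ‖f θ‖ ≤ supNorm f := by
  have hb : BddAbove (Set.range (fun t : Set.Icc (-Real.pi) Real.pi => ‖f (t : ℝ)‖)) := by
    rw [show (fun t : Set.Icc (-Real.pi) Real.pi => ‖f (t : ℝ)‖)
        = (fun x => ‖f x‖) ∘ (Subtype.val) from rfl, Set.range_comp, Subtype.range_coe]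
    exact IsCompact.bddAbove_image isCompact_Icc (hf.norm.continuousOn)
  exact le_ciSup hb ⟨θ, hθ⟩

lemma lam_bound (f : ℝ → ℂ) (hf : Continuous f) (n : ℕ) (hn : 0 < n) (j : Fin n) :
    ‖lam f n j‖ ≤ supNorm f := by
  have hπ : (0 : ℝ) < Real.pi := Real.pi_pos
  set M := supNorm f with hM
  have hM0 : 0 ≤ M := supNorm_nonneg f
  rw [lam_eq f hf n hn j, norm_mul]
  have h2π : ‖(1 / (2 * (Real.pi : ℂ)))‖ = 1 / (2 * Real.pi) := by
    rw [show (1 / (2 * (Real.pi : ℂ))) = (((1 / (2 * Real.pi) : ℝ)) : ℂ) from by push_cast; ring,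
      Complex.norm_real]
    rw [Real.norm_eq_abs, abs_of_pos (by positivity)]
  rw [h2π]
  have hnorm : ‖∫ θ in (-Real.pi)..Real.pi, f θ * ((Kr n j θ : ℝ) : ℂ)‖ ≤ M * (2 * Real.pi) := by
    calc ‖∫ θ in (-Real.pi)..Real.pi, f θ * ((Kr n j θ : ℝ) : ℂ)‖
        ≤ ∫ θ in (-Real.pi)..Real.pi, ‖f θ * ((Kr n j θ : ℝ) : ℂ)‖ :=
          intervalIntegral.norm_integral_le_integral_norm (by linarith)
      _ = ∫ θ in (-Real.pi)..Real.pi, ‖f θ‖ * Kr n j θ := by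
          refine intervalIntegral.integral_congr (fun θ _ => ?_)
          rw [norm_mul, Complex.norm_real, Real.norm_eq_abs, _root_.abs_of_nonneg (Kr_nonneg n j θ)]
      _ ≤ ∫ θ in (-Real.pi)..Real.pi, M * Kr n j θ := by
          refine intervalIntegral.integral_mono_on (by linarith)
            ((hf.norm.mul (Kr_cont n j)).intervalIntegrable _ _)
            ((continuous_const.mul (Kr_cont n j)).intervalIntegrable _ _)
            (fun θ hθ => ?_)
          exact mul_le_mul_of_nonneg_right (norm_le_supNorm f hf θ hθ) (Kr_nonneg n j θ)
      _ = M * (2 * Real.pi) := by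
          rw [intervalIntegral.integral_const_mul, intKr n hn j]
  calc (1 / (2 * Real.pi)) * ‖∫ θ in (-Real.pi)..Real.pi, f θ * ((Kr n j θ : ℝ) : ℂ)‖
      ≤ (1 / (2 * Real.pi)) * (M * (2 * Real.pi)) :=
        mul_le_mul_of_nonneg_left hnorm (by positivity)
    _ = M := by field_simp


end S4

/-- For 2π-periodic continuous f, the optimal circulant preconditioner satisfies
    ‖c_n[f]‖₂ ≤ 2‖f‖_∞. -/
theorem stmt_4 (f : ℝ → ℂ) (hf : Continuous f)
    (hper : ∀ θ, f (θ + 2 * Real.pi) = f θ) (n : ℕ) (hn : 1 ≤ n) :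
    spec (optCirculant f n) ≤ 2 * supNorm f := by
  have hn0 : 0 < n := hn
  have h := S4.spec_le_of_eigen hn0 (optCirculant f n) (S4.lam f n)
    (fun j => S4.eigen f n hn0 j) (supNorm f) (S4.supNorm_nonneg f)
    (fun j => S4.lam_bound f hf n hn0 j)
  have h2 := S4.supNorm_nonneg f
  linarith
end
end

section
/- Let A, B, U, W be n-by-n complex matrices with A − B = U − W, ‖A‖₂ ≤ s and ‖B‖₂ ≤ s. Then for every positive integer K, Σ_{i=1}^{K}(1/i!)(A^i − B^i) = R + J, where R = Σ_{i=1}^{K}(1/i!)Σ_{j=0}^{i−1} A^j U B^{i−1−j} satisfies rank R ≤ K · rank U, and J = −Σ_{i=1}^{K}(1/i!)Σ_{j=0}^{i−1} A^j W B^{i−1−j} satisfies ‖J‖₂ ≤ ‖W‖₂ · e^{s}. -/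
open scoped BigOperators

noncomputable section

set_option synthInstance.maxHeartbeats 1000000

section auxlemmas

variable {n : ℕ}

lemma spec_nonneg' (A : Matrix (Fin n) (Fin n) ℂ) : 0 ≤ spec A := norm_nonneg _

lemma spec_neg' (A : Matrix (Fin n) (Fin n) ℂ) : spec (-A) = spec A := by
  unfold spec; rw [map_neg, norm_neg]

lemma spec_smul' (c : ℂ) (A : Matrix (Fin n) (Fin n) ℂ) : spec (c • A) = ‖c‖ * spec A := by
  unfold spec; rw [map_smul]
  exact norm_smul c (Matrix.toEuclideanCLM (𝕜 := ℂ) A :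
    EuclideanSpace ℂ (Fin n) →L[ℂ] EuclideanSpace ℂ (Fin n))

lemma spec_sum_le' {α : Type*} (s : Finset α) (f : α → Matrix (Fin n) (Fin n) ℂ) :
    spec (∑ i ∈ s, f i) ≤ ∑ i ∈ s, spec (f i) := by
  unfold spec; rw [map_sum]; exact norm_sum_le _ _

lemma spec_mul_le' (A B : Matrix (Fin n) (Fin n) ℂ) : spec (A * B) ≤ spec A * spec B := by
  unfold spec; rw [map_mul]; exact norm_mul_le _ _

lemma spec_pow_le' (A : Matrix (Fin n) (Fin n) ℂ) {s : ℝ} (hs : 0 ≤ s) (h : spec A ≤ s)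
    (k : ℕ) : spec (A ^ k) ≤ s ^ k := by
  induction k with
  | zero =>
    simp only [pow_zero]
    unfold spec
    rw [map_one]
    calc ‖(1 : EuclideanSpace ℂ (Fin n) →L[ℂ] EuclideanSpace ℂ (Fin n))‖
        = ‖ContinuousLinearMap.id ℂ (EuclideanSpace ℂ (Fin n))‖ := rfl
      _ ≤ 1 := ContinuousLinearMap.norm_id_le
  | succ k ih =>
    rw [pow_succ, pow_succ]
    exact le_trans (spec_mul_le' _ _)
      (mul_le_mul ih h (spec_nonneg' A) (pow_nonneg hs k))

lemma tele' {R : Type*} [Ring R] (A B : R) (i : ℕ) :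
    A ^ i - B ^ i = ∑ j ∈ Finset.range i, A ^ j * (A - B) * B ^ (i - 1 - j) := by
  induction i with
  | zero => simp
  | succ i ih =>
    rw [Finset.sum_range_succ]
    have h : ∀ j ∈ Finset.range i,
        A ^ j * (A - B) * B ^ (i + 1 - 1 - j) = A ^ j * (A - B) * B ^ (i - 1 - j) * B := by
      intro j hj
      rw [Finset.mem_range] at hj
      have he : i + 1 - 1 - j = (i - 1 - j) + 1 := by omega
      rw [he, pow_succ, ← mul_assoc]
    rw [Finset.sum_congr rfl h, ← Finset.sum_mul, ← ih]
    simp only [Nat.add_sub_cancel, Nat.sub_self, pow_zero, mul_one]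
    rw [pow_succ, pow_succ]
    noncomm_ring

lemma rank_add_le' {m : ℕ} (A B : Matrix (Fin m) (Fin m) ℂ) :
    (A + B).rank ≤ A.rank + B.rank := by
  rw [Matrix.rank, Matrix.rank, Matrix.rank, Matrix.mulVecLin_add]
  have h : LinearMap.range (A.mulVecLin + B.mulVecLin) ≤
      LinearMap.range A.mulVecLin ⊔ LinearMap.range B.mulVecLin := by
    rintro x ⟨y, rfl⟩
    exact Submodule.add_mem_sup ⟨y, rfl⟩ ⟨y, rfl⟩
  exact le_trans (Submodule.finrank_mono h)
    (Submodule.finrank_add_le_finrank_add_finrank _ _)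

lemma rank_sum_le' {m : ℕ} {α : Type*} (s : Finset α) (f : α → Matrix (Fin m) (Fin m) ℂ) :
    (∑ i ∈ s, f i).rank ≤ ∑ i ∈ s, (f i).rank := by
  classical
  induction s using Finset.induction_on with
  | empty => simp [Matrix.rank_zero]
  | insert a t h ih =>
    rw [Finset.sum_insert h, Finset.sum_insert h]
    exact le_trans (rank_add_le' _ _) (by omega)

end auxlemmas

/-- If A − B = U − W with ‖A‖₂ ≤ s and ‖B‖₂ ≤ s, then for every K ≥ 1,
    Σ_{i=1}^{K}(1/i!)(A^i − B^i) = R + J where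
    R = Σ_{i=1}^{K}(1/i!)Σ_{j=0}^{i−1} A^j U B^{i−1−j} has rank R ≤ K · rank U and
    J = −Σ_{i=1}^{K}(1/i!)Σ_{j=0}^{i−1} A^j W B^{i−1−j} has ‖J‖₂ ≤ ‖W‖₂ e^s. -/
theorem stmt_19 (n : ℕ) (A B U W : Matrix (Fin n) (Fin n) ℂ) (s : ℝ)
    (hdec : A - B = U - W) (hA : spec A ≤ s) (hB : spec B ≤ s) (K : ℕ) (hK : 0 < K) :
    (∑ i ∈ Finset.Icc 1 K, ((i.factorial : ℂ))⁻¹ • (A ^ i - B ^ i)) =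
      (∑ i ∈ Finset.Icc 1 K, ((i.factorial : ℂ))⁻¹ •
        ∑ j ∈ Finset.range i, A ^ j * U * B ^ (i - 1 - j)) +
      (-(∑ i ∈ Finset.Icc 1 K, ((i.factorial : ℂ))⁻¹ •
        ∑ j ∈ Finset.range i, A ^ j * W * B ^ (i - 1 - j))) ∧
    (∑ i ∈ Finset.Icc 1 K, ((i.factorial : ℂ))⁻¹ •
        ∑ j ∈ Finset.range i, A ^ j * U * B ^ (i - 1 - j)).rank ≤ K * U.rank ∧
    spec (-(∑ i ∈ Finset.Icc 1 K, ((i.factorial : ℂ))⁻¹ •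
        ∑ j ∈ Finset.range i, A ^ j * W * B ^ (i - 1 - j))) ≤ spec W * Real.exp s := by
  have hs : 0 ≤ s := le_trans (spec_nonneg' A) hA
  refine ⟨?_, ?_, ?_⟩
  · -- decomposition
    have h1 : ∀ i ∈ Finset.Icc 1 K, ((i.factorial : ℂ))⁻¹ • (A ^ i - B ^ i)
        = ((i.factorial : ℂ))⁻¹ • (∑ j ∈ Finset.range i, A ^ j * U * B ^ (i - 1 - j))
          + -(((i.factorial : ℂ))⁻¹ • (∑ j ∈ Finset.range i, A ^ j * W * B ^ (i - 1 - j))) := by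
      intro i _
      rw [tele' A B i, hdec]
      have h2 : (∑ j ∈ Finset.range i, A ^ j * (U - W) * B ^ (i - 1 - j))
          = (∑ j ∈ Finset.range i, A ^ j * U * B ^ (i - 1 - j))
            - (∑ j ∈ Finset.range i, A ^ j * W * B ^ (i - 1 - j)) := by
        rw [← Finset.sum_sub_distrib]
        exact Finset.sum_congr rfl fun j _ => by rw [mul_sub, sub_mul]
      rw [h2, smul_sub, sub_eq_add_neg]
    rw [Finset.sum_congr rfl h1, Finset.sum_add_distrib, Finset.sum_neg_distrib]
  · -- rank bound
    have hswap : (∑ i ∈ Finset.Icc 1 K, ((i.factorial : ℂ))⁻¹ •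
          ∑ j ∈ Finset.range i, A ^ j * U * B ^ (i - 1 - j))
        = ∑ j ∈ Finset.range K, A ^ j *
            (U * (∑ i ∈ Finset.Icc (j + 1) K, ((i.factorial : ℂ))⁻¹ • B ^ (i - 1 - j))) := by
      simp_rw [Finset.smul_sum]
      rw [Finset.sum_comm' (t' := Finset.range K) (s' := fun j => Finset.Icc (j + 1) K)
        (by intro i j; simp only [Finset.mem_Icc, Finset.mem_range]; omega)]
      refine Finset.sum_congr rfl fun j _ => ?_
      simp_rw [Finset.mul_sum, mul_smul_comm, mul_assoc]
    rw [hswap]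
    refine le_trans (rank_sum_le' _ _) ?_
    have hb : ∀ j ∈ Finset.range K,
        (A ^ j * (U * (∑ i ∈ Finset.Icc (j + 1) K,
          ((i.factorial : ℂ))⁻¹ • B ^ (i - 1 - j)))).rank ≤ U.rank :=
      fun j _ => le_trans (Matrix.rank_mul_le_right _ _) (Matrix.rank_mul_le_left _ _)
    calc _ ≤ ∑ _j ∈ Finset.range K, U.rank := Finset.sum_le_sum hb
      _ = K * U.rank := by rw [Finset.sum_const, Finset.card_range, smul_eq_mul]
  · -- norm bound
    rw [spec_neg']
    have hterm : ∀ i ∈ Finset.Icc 1 K,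
        spec (((i.factorial : ℂ))⁻¹ • ∑ j ∈ Finset.range i, A ^ j * W * B ^ (i - 1 - j))
          ≤ spec W * (s ^ (i - 1) * i / i.factorial) := by
      intro i hi
      rw [Finset.mem_Icc] at hi
      rw [spec_smul']
      have hnorm : ‖((i.factorial : ℂ))⁻¹‖ = ((i.factorial : ℝ))⁻¹ := by
        rw [norm_inv, Complex.norm_natCast]
      have hin : spec (∑ j ∈ Finset.range i, A ^ j * W * B ^ (i - 1 - j))
          ≤ i * (spec W * s ^ (i - 1)) := by
        refine le_trans (spec_sum_le' _ _) ?_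
        have hj : ∀ j ∈ Finset.range i,
            spec (A ^ j * W * B ^ (i - 1 - j)) ≤ spec W * s ^ (i - 1) := by
          intro j hj
          rw [Finset.mem_range] at hj
          have hpa := spec_pow_le' A hs hA j
          have hpb := spec_pow_le' B hs hB (i - 1 - j)
          calc spec (A ^ j * W * B ^ (i - 1 - j))
              ≤ spec (A ^ j * W) * spec (B ^ (i - 1 - j)) := spec_mul_le' _ _
            _ ≤ (spec (A ^ j) * spec W) * spec (B ^ (i - 1 - j)) :=
                mul_le_mul_of_nonneg_right (spec_mul_le' _ _) (spec_nonneg' _)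
            _ ≤ (s ^ j * spec W) * s ^ (i - 1 - j) := by
                have h1 : spec (A ^ j) * spec W ≤ s ^ j * spec W :=
                  mul_le_mul_of_nonneg_right hpa (spec_nonneg' _)
                exact mul_le_mul h1 hpb (spec_nonneg' _)
                  (mul_nonneg (pow_nonneg hs j) (spec_nonneg' _))
            _ = spec W * s ^ (i - 1) := by
                have he : j + (i - 1 - j) = i - 1 := by omega
                rw [mul_comm (s ^ j), mul_assoc, ← pow_add, he]
        calc (∑ j ∈ Finset.range i, spec (A ^ j * W * B ^ (i - 1 - j)))
            ≤ ∑ _j ∈ Finset.range i, spec W * s ^ (i - 1) := Finset.sum_le_sum hj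
          _ = i * (spec W * s ^ (i - 1)) := by
              rw [Finset.sum_const, Finset.card_range, nsmul_eq_mul]
      rw [hnorm]
      calc ((i.factorial : ℝ))⁻¹ * spec (∑ j ∈ Finset.range i, A ^ j * W * B ^ (i - 1 - j))
          ≤ ((i.factorial : ℝ))⁻¹ * (i * (spec W * s ^ (i - 1))) :=
            mul_le_mul_of_nonneg_left hin (inv_nonneg.mpr (Nat.cast_nonneg _))
        _ = spec W * (s ^ (i - 1) * i / i.factorial) := by ring
    calc spec (∑ i ∈ Finset.Icc 1 K, ((i.factorial : ℂ))⁻¹ •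
          ∑ j ∈ Finset.range i, A ^ j * W * B ^ (i - 1 - j))
        ≤ ∑ i ∈ Finset.Icc 1 K, spec (((i.factorial : ℂ))⁻¹ •
            ∑ j ∈ Finset.range i, A ^ j * W * B ^ (i - 1 - j)) := spec_sum_le' _ _
      _ ≤ ∑ i ∈ Finset.Icc 1 K, spec W * (s ^ (i - 1) * i / i.factorial) :=
          Finset.sum_le_sum hterm
      _ = spec W * ∑ i ∈ Finset.Icc 1 K, s ^ (i - 1) * i / i.factorial := by
          rw [Finset.mul_sum]
      _ ≤ spec W * Real.exp s := by
          refine mul_le_mul_of_nonneg_left ?_ (spec_nonneg' W)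
          have hre : (∑ i ∈ Finset.Icc 1 K, s ^ (i - 1) * i / i.factorial)
              = ∑ m ∈ Finset.range K, s ^ m / m.factorial := by
            rw [← Finset.Ico_add_one_right_eq_Icc, Finset.sum_Ico_eq_sum_range]
            norm_num
            refine Finset.sum_congr rfl fun m _ => ?_
            have h2 : ((1 + m).factorial : ℝ) = ((m : ℝ) + 1) * m.factorial := by
              rw [Nat.add_comm 1 m, Nat.factorial_succ]; push_cast; ring
            have hm : (m.factorial : ℝ) ≠ 0 := Nat.cast_ne_zero.mpr m.factorial_ne_zero
            have hm1 : ((m : ℝ) + 1) ≠ 0 := by positivity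
            rw [h2]
            field_simp
            ring
          rw [hre]
          exact Real.sum_le_exp_of_nonneg hs K
end
end
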